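/- Let T ⊂ ℓ², r > 1, M ≥ 1, and let (𝒜_n)_{n≥0} be a nested admissible sequence of partitions of T. For each n ≥ 0 and A ∈ 𝒜_n let j_n(A) ∈ ℤ and π_n(A) ∈ T be given; write j_n(t) = j_n(A_n(t)) and π_n(t) = π_n(A_n(t)), where A_n(t) is the element of 𝒜_n containing t, and set I_n(t) = {i ≥ 1 : |π_{k+1}(t)_i − π_k(t)_i| ≤ r^{−j_k(t)} for all 0 ≤ k ≤ n−1} (so I_0(t) = ℕ). Assume: (i) ‖t − s‖₂ ≤ √M · r^{−j_0(T)} for all s, t ∈ T, where j_0(T) is the value of j_0 on the single element of 𝒜_0; (ii) for every n ≥ 1 and A ∈ 𝒜_n with A ⊂ A' ∈ 𝒜_{n−1}, either j_n(A) = j_{n−1}(A') and π_n(A) = π_{n−1}(A'), or j_n(A) > j_{n−1}(A'), π_n(A) ∈ A', and Σ_{i ∈ I_n(t)} min(|t_i − π_n(A)_i|², r^{−2 j_n(A)}) ≤ M 2^n r^{−2 j_n(A)} for every t ∈ A. Then for every t ∈ T and every n ≥ 0 one has |ℕ ∖ I_n(t)| ≤ M 2^n, and there exists a set J_n(t) ⊆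 I_n(t) with |ℕ ∖ J_n(t)| ≤ M 2^{n+1} such that Σ_{i ∈ J_n(t)} |t_i − π_n(t)_i|² ≤ M 2^n r^{−2 j_n(t)}. -/

import Mathlib

open MeasureTheory ProbabilityTheory ENNReal Filter Pointwise

noncomputable section

/-- The space `ℓ²` of square-summable real sequences. -/
abbrev ℓ2 : Type := lp (fun _ : ℕ => ℝ) 2

/-- `P` is a partition of the set `T`. -/
def IsPartitionOf {α : Type*} (T : Set α) (P : Set (Set α)) : Prop :=
  (∀ S ∈ P, S ⊆ T) ∧ ∀ x ∈ T, ∃! S, S ∈ P ∧ x ∈ S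

/-- An admissible sequence of partitions of `T`: `𝒜 0 = {T}` and `|𝒜 n| ≤ 2 ^ 2 ^ n`. -/
def IsAdmissibleSeq {α : Type*} (T : Set α) (A : ℕ → Set (Set α)) : Prop :=
  A 0 = {T} ∧ (∀ n, IsPartitionOf T (A n)) ∧
    ∀ n, 1 ≤ n → (A n).Finite ∧ (A n).ncard ≤ 2 ^ 2 ^ n

/-- A chaining compatible with the sequence of partitions `A`: each `π n` is constant on
every element of `A n` and maps points of a partition element into that element. -/
def IsCompatibleChaining {α : Type*} (T : Set α) (A : ℕ → Set (Set α)) (π : ℕ → α → α) : Prop :=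
  ∀ n, ∀ S ∈ A n, ∀ x ∈ S, π n x ∈ S ∧ ∀ y ∈ S, π n x = π n y

/-- The chaining functional `γ_X(T)`. -/
def gammaFunctional {α Ω : Type*} [MeasurableSpace Ω] (μ : Measure Ω)
    (X : α → Ω → ℝ) (T : Set α) : ℝ≥0∞ :=
  ⨅ (P : {q : (ℕ → Set (Set α)) × (ℕ → α → α) //
      IsAdmissibleSeq T q.1 ∧ IsCompatibleChaining T q.1 q.2}),
    ⨆ t ∈ T, ∑' n : ℕ,
      eLpNorm (fun ω => X (P.1.2 (n + 1) t) ω - X (P.1.2 n t) ω) (2 ^ (n + 1)) μ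

/-- `S_X(T) = sup { E sup_{t ∈ F} X t : F finite nonempty subset of T }`. -/
def SFunctional {α Ω : Type*} [MeasurableSpace Ω] (μ : Measure Ω)
    (X : α → Ω → ℝ) (T : Set α) : ℝ≥0∞ :=
  ⨆ (F : Finset α) (hF : F.Nonempty) (_ : ↑F ⊆ T),
    ENNReal.ofReal (∫ ω, F.sup' hF (fun t => X t ω) ∂μ)

/-- A sequence of independent Rademacher random variables. -/
def IsRademacherFamily {Ω : Type*} [MeasurableSpace Ω] (μ : Measure Ω)
    (ε : ℕ → Ω → ℝ) : Prop :=
  (∀ i, Measurable (ε i)) ∧ iIndepFun ε μ ∧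
    ∀ i, μ.map (ε i) =
      (2 : ℝ≥0∞)⁻¹ • Measure.dirac (1 : ℝ) + (2 : ℝ≥0∞)⁻¹ • Measure.dirac (-1 : ℝ)

/-- A sequence of independent standard Gaussian random variables. -/
def IsGaussianFamily {Ω : Type*} [MeasurableSpace Ω] (μ : Measure Ω)
    (g : ℕ → Ω → ℝ) : Prop :=
  (∀ i, Measurable (g i)) ∧ iIndepFun g μ ∧
    ∀ i, μ.map (g i) = gaussianReal 0 1

/-- A sequence of i.i.d. random variables with mean `0` and variance `1`. -/
def IsIIDStandard {Ω : Type*} [MeasurableSpace Ω] (μ : Measure Ω) (ξ : ℕ → Ω → ℝ) : Prop :=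
  (∀ i, Measurable (ξ i)) ∧ iIndepFun ξ μ ∧
    (∀ i, IdentDistrib (ξ i) (ξ 0) μ μ) ∧
    (∀ i, ∫ ω, ξ i ω ∂μ = 0) ∧ (∀ i, ∫ ω, (ξ i ω) ^ 2 ∂μ = 1)

/-- `X` is the canonical process associated with `(ξ i)`: for every `t ∈ ℓ²` the series
`∑ i, t i * ξ i` converges to `X t` in `L²`. -/
def IsCanonicalProcess {Ω : Type*} [MeasurableSpace Ω] (μ : Measure Ω)
    (ξ : ℕ → Ω → ℝ) (X : ℓ2 → Ω → ℝ) : Prop :=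
  ∀ t : ℓ2, Tendsto
    (fun N => eLpNorm (fun ω => (∑ i ∈ Finset.range N, t i * ξ i ω) - X t ω) 2 μ)
    atTop (nhds 0)


/-- The set `I_n(t)` of coordinates where all increments of the chain up to level `n`
are small: `I_n(t) = {i : |π_{k+1}(t)_i − π_k(t)_i| ≤ r^{−j_k(t)} for all 0 ≤ k ≤ n−1}`. -/
def chainSet (r : ℝ) (j : ℕ → ℓ2 → ℤ) (π : ℕ → ℓ2 → ℓ2) (n : ℕ) (t : ℓ2) : Set ℕ :=
  {i | ∀ k < n, |(π (k + 1) t) i - (π k t) i| ≤ r ^ (-(j k t))}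


section AuxLemmas

private lemma summable_sq_diff' (u v : ℓ2) :
    Summable (fun i => |(u : ∀ _ : ℕ, ℝ) i - (v : ∀ _ : ℕ, ℝ) i| ^ 2) := by
  have h : Memℓp (↑(u - v) : ∀ _ : ℕ, ℝ) 2 := lp.memℓp (u - v)
  have hs := h.summable (by norm_num)
  have he : (fun i => ‖(↑(u - v) : ∀ _ : ℕ, ℝ) i‖ ^ (2 : ℝ≥0∞).toReal)
      = fun i => |(u : ∀ _ : ℕ, ℝ) i - (v : ∀ _ : ℕ, ℝ) i| ^ 2 := by
    funext i
    rw [lp.coeFn_sub, show ((2:ℝ≥0∞).toReal) = ((2:ℕ):ℝ) by norm_num, Real.rpow_natCast]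
    simp [Real.norm_eq_abs]
  rwa [he] at hs

private lemma tsum_sq_eq' (u v : ℓ2) :
    ∑' i, |(u : ∀ _ : ℕ, ℝ) i - (v : ∀ _ : ℕ, ℝ) i| ^ 2 = ‖u - v‖ ^ 2 := by
  have h := lp.norm_rpow_eq_tsum (p := 2) (by norm_num) (u - v)
  rw [show ((2:ℝ≥0∞).toReal) = ((2:ℕ):ℝ) by norm_num, Real.rpow_natCast] at h
  rw [h]
  apply tsum_congr; intro i
  rw [Real.rpow_natCast]
  have : (↑(u - v) : ∀ _ : ℕ, ℝ) i = (u : ∀ _ : ℕ, ℝ) i - (v : ∀ _ : ℕ, ℝ) i := by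
    rw [lp.coeFn_sub]; rfl
  rw [← this]
  simp [Real.norm_eq_abs]

private lemma count_lemma' (f : ℕ → ℝ) (hf : Summable f) (h0 : ∀ i, 0 ≤ f i) {c B : ℝ}
    (hc : 0 < c) (E : Set ℕ) (hE : ∀ i ∈ E, c ≤ f i) (hB : ∑' i, f i ≤ B) :
    E.Finite ∧ (E.ncard : ℝ) * c ≤ B := by
  have hfin : E.Finite := by
    have h2 : ∀ᶠ i in Filter.cofinite, f i < c := by
      simpa using hf.tendsto_cofinite_zero.eventually (eventually_lt_nhds hc)
    refine h2.subset ?_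
    intro i hi
    exact not_lt.2 (hE i hi)
  refine ⟨hfin, ?_⟩
  calc (E.ncard : ℝ) * c = ∑ _i ∈ hfin.toFinset, c := by
        rw [Finset.sum_const, Set.ncard_eq_toFinset_card E hfin, nsmul_eq_mul]
    _ ≤ ∑ i ∈ hfin.toFinset, f i := Finset.sum_le_sum (fun i hi => hE i (hfin.mem_toFinset.mp hi))
    _ ≤ ∑' i, f i := Summable.sum_le_tsum _ (fun i _ => h0 i) hf
    _ ≤ B := hB

private lemma zpow_neg_two_mul' {r : ℝ} (hr : 0 < r) (a : ℤ) :
    r ^ (-(2 * a)) = (r ^ (-a)) ^ 2 := by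
  rw [← zpow_natCast (r ^ (-a)) 2, ← zpow_mul]
  ring_nf

end AuxLemmas

/-- structural properties of the partition scheme of the Bernoulli theorem:
the complement of `I_n(t)` has at most `M 2^n` elements, and after removing at most
`M 2^{n+1}` coordinates the truncation in the increment bound can be removed. -/
theorem chainSet_complement_card_le (T : Set ℓ2) (r M : ℝ) (hr : 1 < r) (hM : 1 ≤ M)
    (A : ℕ → Set (Set ℓ2)) (hA : IsAdmissibleSeq T A)
    (hnested : ∀ n : ℕ, 1 ≤ n → ∀ S ∈ A n, ∃ S' ∈ A (n - 1), S ⊆ S')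
    (j : ℕ → ℓ2 → ℤ) (π : ℕ → ℓ2 → ℓ2)
    (hconst : ∀ n, ∀ S ∈ A n, ∀ x ∈ S, ∀ y ∈ S, j n x = j n y ∧ π n x = π n y)
    (hπT : ∀ t ∈ T, ∀ n, π n t ∈ T)
    (hi : ∀ s ∈ T, ∀ t ∈ T, ‖t - s‖ ≤ Real.sqrt M * r ^ (-(j 0 t)))
    (hii : ∀ n : ℕ, 1 ≤ n → ∀ t ∈ T,
      (j n t = j (n - 1) t ∧ π n t = π (n - 1) t) ∨
      (j (n - 1) t < j n t ∧ (∀ S' ∈ A (n - 1), t ∈ S' → π n t ∈ S') ∧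
        ∀ s : ℓ2, (∃ S ∈ A n, t ∈ S ∧ s ∈ S) →
          ∑' i : chainSet r j π n s,
              min (|(s : ∀ _ : ℕ, ℝ) i - (π n t) i| ^ 2) (r ^ (-(2 * j n t))) ≤
            M * 2 ^ n * r ^ (-(2 * j n t)))) :
    ∀ t ∈ T, ∀ n : ℕ,
      ((chainSet r j π n t)ᶜ.Finite ∧
        (((chainSet r j π n t)ᶜ.ncard : ℝ) ≤ M * 2 ^ n)) ∧
      ∃ J ⊆ chainSet r j π n t, Jᶜ.Finite ∧ ((Jᶜ.ncard : ℝ) ≤ M * 2 ^ (n + 1)) ∧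
        ∑' i : J, |(t : ∀ _ : ℕ, ℝ) i - (π n t) i| ^ 2 ≤ M * 2 ^ n * r ^ (-(2 * j n t)) := by
  intro t ht
  obtain ⟨hA0, hApart, -⟩ := hA
  have hr0 : (0:ℝ) < r := lt_trans one_pos hr
  have hM0 : (0:ℝ) < M := lt_of_lt_of_le one_pos hM
  have exists_cell : ∀ x ∈ T, ∀ n : ℕ, ∃ S ∈ A n, x ∈ S := by
    intro x hx n
    obtain ⟨S, ⟨hS1, hS2⟩, -⟩ := (hApart n).2 x hx
    exact ⟨S, hS1, hS2⟩
  have subset_cell : ∀ n m : ℕ, m ≤ n → ∀ S ∈ A n, ∃ S' ∈ A m, S ⊆ S' := by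
    intro n
    induction n with
    | zero =>
      intro m hm S hS
      obtain rfl := Nat.le_zero.mp hm
      exact ⟨S, hS, subset_rfl⟩
    | succ n ih =>
      intro m hm S hS
      rcases eq_or_lt_of_le hm with h | h
      · exact ⟨S, h ▸ hS, subset_rfl⟩
      · obtain ⟨S', hS', hsub⟩ := hnested (n+1) (by omega) S hS
        obtain ⟨S'', h1, h2⟩ := ih m (by omega) S' hS'
        exact ⟨S'', h1, hsub.trans h2⟩
  have agree : ∀ (k n : ℕ), k ≤ n → ∀ S ∈ A n, ∀ x ∈ S, ∀ y ∈ S,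
      j k x = j k y ∧ π k x = π k y := by
    intro k n hkn S hS x hx y hy
    obtain ⟨S', hS', hsub⟩ := subset_cell n k hkn S hS
    exact hconst k S' hS' x (hsub hx) y (hsub hy)
  have chain_agree : ∀ (m n : ℕ), m ≤ n → ∀ S ∈ A n, ∀ x ∈ S, ∀ y ∈ S,
      chainSet r j π m x = chainSet r j π m y := by
    intro m n hmn S hS x hx y hy
    ext i
    simp only [chainSet, Set.mem_setOf_eq]
    have key : ∀ k, k < m →
        ((|(π (k+1) x) i - (π k x) i| ≤ r ^ (-(j k x))) ↔
          (|(π (k+1) y) i - (π k y) i| ≤ r ^ (-(j k y)))) := by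
      intro k hk
      rw [(agree (k+1) n (by omega) S hS x hx y hy).2,
        (agree k n (by omega) S hS x hx y hy).2,
        (agree k n (by omega) S hS x hx y hy).1]
    exact ⟨fun h k hk => (key k hk).1 (h k hk), fun h k hk => (key k hk).2 (h k hk)⟩
  have chain_anti : ∀ (m n : ℕ), m ≤ n → ∀ x : ℓ2,
      chainSet r j π n x ⊆ chainSet r j π m x :=
    fun m n hmn x i hi k hk => hi k (by omega)
  have last_change : ∀ n : ℕ, ∃ m, m ≤ n ∧ j n t = j m t ∧ π n t = π m t ∧
      (m = 0 ∨ (1 ≤ m ∧ j (m-1) t < j m t ∧ (∀ S' ∈ A (m-1), t ∈ S' → π m t ∈ S') ∧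
        ∀ s : ℓ2, (∃ S ∈ A m, t ∈ S ∧ s ∈ S) →
          ∑' i : chainSet r j π m s,
              min (|(s : ∀ _ : ℕ, ℝ) i - (π m t) i| ^ 2) (r ^ (-(2 * j m t))) ≤
            M * 2 ^ m * r ^ (-(2 * j m t)))) := by
    intro n
    induction n with
    | zero => exact ⟨0, le_refl 0, rfl, rfl, Or.inl rfl⟩
    | succ n ih =>
      rcases hii (n+1) (by omega) t ht with h | h
      · obtain ⟨m, hm, h1, h2, h3⟩ := ih
        exact ⟨m, by omega, h.1.trans h1, h.2.trans h2, h3⟩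
      · exact ⟨n+1, le_refl _, rfl, rfl, Or.inr ⟨by omega, h⟩⟩
  intro n
  induction n with
  | zero =>
    have h0 : chainSet r j π 0 t = Set.univ := by
      ext i; simp [chainSet]
    have hπ0T : π 0 t ∈ T := hπT t ht 0
    constructor
    · rw [h0]
      constructor
      · simp
      · simp only [Set.compl_univ, Set.ncard_empty, Nat.cast_zero, pow_zero, mul_one]
        positivity
    · refine ⟨Set.univ, by rw [h0], by simp, ?_, ?_⟩
      · simp only [Set.compl_univ, Set.ncard_empty, Nat.cast_zero]
        positivity
      · have hnorm := hi (π 0 t) hπ0T t ht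
        have hrj : (0:ℝ) < r ^ (-(j 0 t)) := zpow_pos hr0 _
        calc ∑' i : (Set.univ : Set ℕ), |(t : ∀ _ : ℕ, ℝ) i - (π 0 t) i| ^ 2
            = ∑' i : ℕ, |(t : ∀ _ : ℕ, ℝ) i - ((π 0 t : ℓ2) : ∀ _ : ℕ, ℝ) i| ^ 2 :=
              tsum_univ (fun i : ℕ => |(t : ∀ _ : ℕ, ℝ) i - ((π 0 t : ℓ2) : ∀ _ : ℕ, ℝ) i| ^ 2)
          _ = ‖t - π 0 t‖ ^ 2 := tsum_sq_eq' t (π 0 t)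
          _ ≤ (Real.sqrt M * r ^ (-(j 0 t))) ^ 2 := by
              apply pow_le_pow_left₀ (norm_nonneg _) hnorm
          _ = M * 2 ^ 0 * r ^ (-(2 * j 0 t)) := by
              rw [mul_pow, Real.sq_sqrt hM0.le, zpow_neg_two_mul' hr0]
              ring
  | succ n ih =>
    obtain ⟨⟨hfinC, hcardC⟩, J, hJsub, hJfin, hJcard, hJsum⟩ := ih
    have h2n : (0:ℝ) < 2 ^ n := by positivity
    rcases hii (n+1) (by omega) t ht with hcase | hcase
    · -- stationary step
      obtain ⟨hj, hπ⟩ := hcase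
      simp only [Nat.add_sub_cancel] at hj hπ
      have hset : chainSet r j π (n+1) t = chainSet r j π n t := by
        ext i
        simp only [chainSet, Set.mem_setOf_eq]
        constructor
        · intro h k hk; exact h k (by omega)
        · intro h k hk
          rcases Nat.lt_succ_iff_lt_or_eq.mp hk with h' | h'
          · exact h k h'
          · subst h'
            rw [hπ, sub_self, abs_zero]
            exact (zpow_pos hr0 _).le
      constructor
      · rw [hset]
        refine ⟨hfinC, hcardC.trans ?_⟩
        rw [pow_succ]
        nlinarith
      · refine ⟨J, hset ▸ hJsub, hJfin, hJcard.trans ?_, ?_⟩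
        · have : (2:ℝ) ^ (n+1) ≤ 2 ^ (n+1+1) := by
            rw [pow_succ (2:ℝ) (n+1)]; nlinarith [pow_pos (by norm_num : (0:ℝ) < 2) (n+1)]
          nlinarith
        · rw [hj, hπ]
          refine hJsum.trans ?_
          have hrp : (0:ℝ) < r ^ (-(2 * j n t)) := zpow_pos hr0 _
          rw [pow_succ]
          nlinarith
    · -- proper step
      obtain ⟨hjlt, hmem, hsum⟩ := hcase
      simp only [Nat.add_sub_cancel] at hjlt hmem hsum
      set c := r ^ (-(2 * j (n+1) t)) with hc_def
      have hc : 0 < c := zpow_pos hr0 _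
      set In := chainSet r j π n t with hIn_def
      set In1 := chainSet r j π (n+1) t with hIn1_def
      have hmono : In1 ⊆ In := chain_anti n (n+1) (by omega) t
      -- the key inequality with s = t
      obtain ⟨Sn1, hSn1, htSn1⟩ := exists_cell t ht (n+1)
      have hstar := hsum t ⟨Sn1, hSn1, htSn1, htSn1⟩
      -- bound on |In \ In1|
      have hEbig : ∀ i ∈ In \ In1, r ^ (-(j n t)) < |(π (n+1) t) i - (π n t) i| := by
        intro i hi
        obtain ⟨hi1, hi2⟩ := hi
        by_contra hcon
        push_neg at hcon
        apply hi2
        intro k hk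
        rcases Nat.lt_succ_iff_lt_or_eq.mp hk with h' | h'
        · exact hi1 k h'
        · subst h'; exact hcon
      have hE : (In \ In1).Finite ∧ ((In \ In1).ncard : ℝ) ≤ M * 2 ^ n := by
        obtain ⟨m, hmn, hjm, hπm, hcase_m⟩ := last_change n
        have hc' : (0:ℝ) < r ^ (-(2 * j n t)) := zpow_pos hr0 _
        have hEle : ∀ i ∈ In \ In1,
            r ^ (-(2 * j n t)) ≤ |(π (n+1) t) i - (π n t) i| ^ 2 := by
          intro i hi
          rw [zpow_neg_two_mul' hr0]
          apply pow_le_pow_left₀ (zpow_pos hr0 _).le (hEbig i hi).le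
        rcases hcase_m with rfl | ⟨hm1, hjlt_m, hmem_m, hsum_m⟩
        · -- m = 0 : the chain never moved; use the diameter bound
          have hj00 : j 0 (π (n+1) t) = j 0 t := by
            have hT0 : T ∈ A 0 := by rw [hA0]; exact rfl
            exact (hconst 0 T hT0 (π (n+1) t) (hπT t ht (n+1)) t ht).1
          have hnorm := hi (π n t) (hπT t ht n) (π (n+1) t) (hπT t ht (n+1))
          rw [hj00, ← hjm] at hnorm
          have htsum : ∑' i, |((π (n+1) t : ℓ2) : ∀ _ : ℕ, ℝ) i - ((π n t : ℓ2) : ∀ _ : ℕ, ℝ) i| ^ 2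
              ≤ M * r ^ (-(2 * j n t)) := by
            rw [tsum_sq_eq']
            calc ‖π (n+1) t - π n t‖ ^ 2 ≤ (Real.sqrt M * r ^ (-(j n t))) ^ 2 :=
                  pow_le_pow_left₀ (norm_nonneg _) hnorm 2
              _ = M * r ^ (-(2 * j n t)) := by
                  rw [mul_pow, Real.sq_sqrt hM0.le, zpow_neg_two_mul' hr0]
          obtain ⟨hfin, hcard⟩ := count_lemma'
            (fun i => |((π (n+1) t : ℓ2) : ∀ _ : ℕ, ℝ) i - ((π n t : ℓ2) : ∀ _ : ℕ, ℝ) i| ^ 2)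
            (summable_sq_diff' _ _) (fun i => by positivity) hc' (In \ In1) hEle htsum
          refine ⟨hfin, ?_⟩
          have hle : ((In \ In1).ncard : ℝ) ≤ M := (mul_le_mul_iff_of_pos_right hc').mp hcard
          calc ((In \ In1).ncard : ℝ) ≤ M := hle
            _ ≤ M * 2 ^ n := le_mul_of_one_le_right hM0.le (one_le_pow₀ (by norm_num))
        · -- 1 ≤ m and the step m was a proper step
          obtain ⟨Sn, hSn, htSn⟩ := exists_cell t ht n
          have hπmem : π (n+1) t ∈ Sn := hmem Sn hSn htSn
          obtain ⟨Sm, hSm, hsubm⟩ := subset_cell n m hmn Sn hSn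
          have hs := hsum_m (π (n+1) t) ⟨Sm, hSm, hsubm htSn, hsubm hπmem⟩
          have hchain_eq : chainSet r j π m (π (n+1) t) = chainSet r j π m t :=
            chain_agree m m le_rfl Sm hSm _ (hsubm hπmem) t (hsubm htSn)
          rw [hchain_eq, ← hjm, ← hπm] at hs
          set F := fun i => min (|((π (n+1) t : ℓ2) : ∀ _ : ℕ, ℝ) i - ((π n t : ℓ2) : ∀ _ : ℕ, ℝ) i| ^ 2)
            (r ^ (-(2 * j n t))) with hF_def
          have hF0 : ∀ i, 0 ≤ F i := fun i => le_min (by positivity) hc'.le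
          have hFsummable : Summable F :=
            Summable.of_nonneg_of_le hF0 (fun i => min_le_left _ _) (summable_sq_diff' _ _)
          have hFind : Summable ((chainSet r j π m t).indicator F) :=
            hFsummable.indicator _
          have hs2 : ∑' i, (chainSet r j π m t).indicator F i ≤ M * 2 ^ m * r ^ (-(2 * j n t)) :=
            (tsum_subtype (chainSet r j π m t) F).symm.trans_le hs
          have hEsub : In \ In1 ⊆ chainSet r j π m t :=
            fun i hi => chain_anti m n hmn t hi.1
          have hEle' : ∀ i ∈ In \ In1,
              r ^ (-(2 * j n t)) ≤ (chainSet r j π m t).indicator F i := by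
            intro i hi
            rw [Set.indicator_of_mem (hEsub hi)]
            exact le_min (hEle i hi) le_rfl
          obtain ⟨hfin, hcard⟩ := count_lemma' _ hFind
            (fun i => Set.indicator_nonneg (fun i _ => hF0 i) i) hc' (In \ In1) hEle' hs2
          refine ⟨hfin, ?_⟩
          have h1 : ((In \ In1).ncard : ℝ) ≤ M * 2 ^ m :=
            (mul_le_mul_iff_of_pos_right hc').mp hcard
          have h2 : (2:ℝ) ^ m ≤ 2 ^ n := pow_le_pow_right₀ (by norm_num) hmn
          nlinarith
      obtain ⟨hEfin, hEcard⟩ := hE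
      have hcompl : In1ᶜ = Inᶜ ∪ (In \ In1) := by
        ext i
        simp only [Set.mem_compl_iff, Set.mem_union, Set.mem_diff]
        constructor
        · intro h
          by_cases h' : i ∈ In
          · exact Or.inr ⟨h', h⟩
          · exact Or.inl h'
        · rintro (h | ⟨h1, h2⟩)
          · exact fun hmem' => h (hmono hmem')
          · exact h2
      have hfinC1 : In1ᶜ.Finite := by rw [hcompl]; exact hfinC.union hEfin
      have hcardC1 : ((In1ᶜ).ncard : ℝ) ≤ M * 2 ^ (n+1) := by
        rw [hcompl]
        calc ((Inᶜ ∪ (In \ In1)).ncard : ℝ) ≤ (Inᶜ.ncard : ℝ) + ((In \ In1).ncard : ℝ) := by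
              exact_mod_cast Set.ncard_union_le _ _
          _ ≤ M * 2 ^ n + M * 2 ^ n := add_le_add hcardC hEcard
          _ = M * 2 ^ (n+1) := by ring
      refine ⟨⟨hfinC1, hcardC1⟩, ?_⟩
      -- part (b)
      set G := fun i => min (|(t : ∀ _ : ℕ, ℝ) i - ((π (n+1) t : ℓ2) : ∀ _ : ℕ, ℝ) i| ^ 2) c
        with hG_def
      have hG0 : ∀ i, 0 ≤ G i := fun i => le_min (by positivity) hc.le
      have hGsummable : Summable G :=
        Summable.of_nonneg_of_le hG0 (fun i => min_le_left _ _) (summable_sq_diff' _ _)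
      have hGind : Summable (In1.indicator G) := hGsummable.indicator _
      have hstar2 : ∑' i, In1.indicator G i ≤ M * 2 ^ (n+1) * c :=
        (tsum_subtype In1 G).symm.trans_le hstar
      set Jn := {i ∈ In1 | |(t : ∀ _ : ℕ, ℝ) i - ((π (n+1) t : ℓ2) : ∀ _ : ℕ, ℝ) i| ^ 2 ≤ c}
        with hJn_def
      have hJnsub : Jn ⊆ In1 := fun i hi => hi.1
      have hDle : ∀ i ∈ In1 \ Jn, c ≤ In1.indicator G i := by
        intro i hi
        rw [Set.indicator_of_mem hi.1]
        have : ¬ (|(t : ∀ _ : ℕ, ℝ) i - ((π (n+1) t : ℓ2) : ∀ _ : ℕ, ℝ) i| ^ 2 ≤ c) := by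
          intro h
          exact hi.2 ⟨hi.1, h⟩
        push_neg at this
        exact le_min this.le le_rfl
      obtain ⟨hDfin, hDcard⟩ := count_lemma' _ hGind
        (fun i => Set.indicator_nonneg (fun i _ => hG0 i) i) hc (In1 \ Jn) hDle hstar2
      have hDcard' : ((In1 \ Jn).ncard : ℝ) ≤ M * 2 ^ (n+1) :=
        (mul_le_mul_iff_of_pos_right hc).mp hDcard
      have hJcompl : Jnᶜ = In1ᶜ ∪ (In1 \ Jn) := by
        ext i
        simp only [Set.mem_compl_iff, Set.mem_union, Set.mem_diff]
        constructor
        · intro h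
          by_cases h' : i ∈ In1
          · exact Or.inr ⟨h', h⟩
          · exact Or.inl h'
        · rintro (h | ⟨h1, h2⟩)
          · exact fun hmem' => h (hJnsub hmem')
          · exact h2
      refine ⟨Jn, hJnsub, ?_, ?_, ?_⟩
      · rw [hJcompl]; exact hfinC1.union hDfin
      · rw [hJcompl]
        calc ((In1ᶜ ∪ (In1 \ Jn)).ncard : ℝ)
            ≤ (In1ᶜ.ncard : ℝ) + ((In1 \ Jn).ncard : ℝ) := by
              exact_mod_cast Set.ncard_union_le _ _
          _ ≤ M * 2 ^ (n+1) + M * 2 ^ (n+1) := add_le_add hcardC1 hDcard'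
          _ = M * 2 ^ (n+1+1) := by ring
      · calc ∑' i : Jn, |(t : ∀ _ : ℕ, ℝ) i - (π (n+1) t) i| ^ 2
            = ∑' i : Jn, G i := by
              apply tsum_congr
              intro i
              rw [hG_def]
              exact (min_eq_left i.2.2).symm
          _ = ∑' i, Jn.indicator G i := tsum_subtype Jn G
          _ ≤ ∑' i, In1.indicator G i := by
              apply Summable.tsum_le_tsum _ (hGsummable.indicator _) hGind
              intro i
              exact Set.indicator_le_indicator_of_subset hJnsub (fun a => hG0 a) i
          _ ≤ M * 2 ^ (n+1) * c := hstar2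


end
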